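/- Let q_1,…,q_n be pairwise distinct reals in (0,1]. Define the n×n matrix Q by Q_{i,j} = q_i · ∑_{S ⊆ [n]\{i}, |S| = j-1} (∏_{k∈S} q_k)(∏_{k∉S, k≠i} (1-q_k)) for i,j ∈ [n]. Then Q is invertible. -/

import Mathlib

theorem Q_matrix_invertible (n : ℕ) (q : Fin n → ℝ)
    (hq : ∀ i, 0 < q i ∧ q i ≤ 1) (hinj : Function.Injective q)
    (M : Matrix (Fin n) (Fin n) ℝ)
    (hM : ∀ i j, M i j = q i *
      ∑ S ∈ (Finset.univ.erase i).powerset.filter (fun S => S.card = (j : ℕ)),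
        (∏ k ∈ S, q k) * ∏ k ∈ (Finset.univ.erase i) \ S, (1 - q k)) :
    IsUnit M := by
  have hq0 : ∀ i, q i ≠ 0 := fun i => ne_of_gt (hq i).1
  set r : Fin n → ℝ := fun j => (q j - 1) / q j with hr
  -- key polynomial identity
  have key : ∀ (i : Fin n) (x : ℝ),
      (∑ l : Fin n, M i l * x ^ (l : ℕ)) =
      q i * ∏ k ∈ Finset.univ.erase i, (q k * x + (1 - q k)) := by
    intro i x
    simp only [hM]
    rw [Finset.prod_add]
    have hcard : ∀ S ∈ (Finset.univ.erase i).powerset, S.card ∈ Finset.range n := by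
      intro S hS
      rw [Finset.mem_powerset] at hS
      rw [Finset.mem_range]
      calc S.card ≤ (Finset.univ.erase i).card := Finset.card_le_card hS
        _ < Finset.univ.card := Finset.card_erase_lt_of_mem (Finset.mem_univ i)
        _ = n := by simp
    calc (∑ l : Fin n, (q i *
        ∑ S ∈ (Finset.univ.erase i).powerset.filter (fun S => S.card = (l : ℕ)),
          (∏ k ∈ S, q k) * ∏ k ∈ (Finset.univ.erase i) \ S, (1 - q k)) * x ^ (l : ℕ))
        = ∑ l ∈ Finset.range n, q i *
          ∑ S ∈ (Finset.univ.erase i).powerset.filter (fun S => S.card = l),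
            ((∏ k ∈ S, q k) * ∏ k ∈ (Finset.univ.erase i) \ S, (1 - q k)) * x ^ l := by
          rw [← Fin.sum_univ_eq_sum_range]
          congr 1; ext l
          rw [Finset.mul_sum, Finset.mul_sum, Finset.sum_mul]
          congr 1; ext S; ring
      _ = ∑ l ∈ Finset.range n, q i *
          ∑ S ∈ (Finset.univ.erase i).powerset.filter (fun S => S.card = l),
            ((∏ k ∈ S, q k) * ∏ k ∈ (Finset.univ.erase i) \ S, (1 - q k)) * x ^ S.card := by
          congr 1; ext l; congr 1
          apply Finset.sum_congr rfl
          intro S hS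
          rw [Finset.mem_filter] at hS
          rw [hS.2]
      _ = q i * ∑ S ∈ (Finset.univ.erase i).powerset,
            ((∏ k ∈ S, q k) * ∏ k ∈ (Finset.univ.erase i) \ S, (1 - q k)) * x ^ S.card := by
          rw [← Finset.mul_sum]
          congr 1
          exact Finset.sum_fiberwise_of_maps_to hcard _
      _ = q i * ∑ S ∈ (Finset.univ.erase i).powerset,
            (∏ k ∈ S, q k * x) * ∏ k ∈ (Finset.univ.erase i) \ S, (1 - q k) := by
          congr 1
          apply Finset.sum_congr rfl
          intro S _
          rw [Finset.prod_mul_distrib, Finset.prod_const]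
          ring
  -- Vandermonde matrix
  set V : Matrix (Fin n) (Fin n) ℝ := Matrix.transpose (Matrix.vandermonde r) with hV
  set d : Fin n → ℝ := fun i => q i * ∏ k ∈ Finset.univ.erase i, (q k * r i + (1 - q k))
    with hd
  have hroot : ∀ j : Fin n, q j * r j + (1 - q j) = 0 := by
    intro j
    show q j * ((q j - 1) / q j) + (1 - q j) = 0
    rw [mul_comm, div_mul_cancel₀ _ (hq0 j)]
    ring
  have hMV : M * V = Matrix.diagonal d := by
    ext i j
    have : (M * V) i j = ∑ l : Fin n, M i l * r j ^ (l : ℕ) := by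
      simp [Matrix.mul_apply, hV, Matrix.vandermonde]
    rw [this, key i (r j)]
    rcases eq_or_ne i j with h | h
    · subst h
      simp [Matrix.diagonal, hd]
    · rw [Matrix.diagonal_apply_ne _ h]
      have hj : j ∈ Finset.univ.erase i := Finset.mem_erase.2 ⟨Ne.symm h, Finset.mem_univ j⟩
      rw [Finset.prod_eq_zero hj (hroot j), mul_zero]
  have hd0 : ∀ i, d i ≠ 0 := by
    intro i
    rw [hd]
    apply mul_ne_zero (hq0 i)
    apply Finset.prod_ne_zero_iff.2
    intro k hk
    rw [Finset.mem_erase] at hk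
    intro hzero
    apply hk.1
    apply hinj
    have hqi := hq0 i
    rw [hr] at hzero
    field_simp at hzero
    nlinarith [hzero]
  have hdet : M.det ≠ 0 := by
    have h1 : M.det * V.det ≠ 0 := by
      rw [← Matrix.det_mul, hMV, Matrix.det_diagonal]
      exact Finset.prod_ne_zero_iff.2 fun i _ => hd0 i
    exact left_ne_zero_of_mul h1
  rw [Matrix.isUnit_iff_isUnit_det]
  exact isUnit_iff_ne_zero.2 hdet
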